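/- Let γ > 0 and a with 1 < a/γ < 2. The system (a/2)u₀ = r(1−u₀)^{a/2γ−1} − γ, a/2 = r(1 − a/2γ)(1−u₀)^{a/2γ−2} in unknowns (u₀, r) has the unique solution u₀ = 4γ(a−γ)/(a(4γ−a)), r = (aγ/(2γ−a))(1−u₀)^{2−a/2γ}, and this solution satisfies 0 < u₀ < 1 and r > 0, with 1 − u₀ = (4γ²−a²)/(a(4γ−a)). -/

import Mathlib

theorem stmt_13 (a γ u₀ r : ℝ) (hγ : 0 < γ) (h1 : γ < a) (h2 : a < 2 * γ)
    (hu₀ : u₀ = 4 * γ * (a - γ) / (a * (4 * γ - a)))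
    (hr : r = (a * γ / (2 * γ - a)) * (1 - u₀) ^ (2 - a / (2 * γ))) :
    ((a/2) * u₀ = r * (1 - u₀) ^ (a / (2 * γ) - 1) - γ)
    ∧ (a/2 = r * (1 - a / (2 * γ)) * (1 - u₀) ^ (a / (2 * γ) - 2))
    ∧ 0 < u₀ ∧ u₀ < 1 ∧ 0 < r
    ∧ 1 - u₀ = (4 * γ^2 - a^2) / (a * (4 * γ - a))
    ∧ ∀ u' r' : ℝ, u' ∈ Set.Ioo (0 : ℝ) 1 → 0 < r' →
        ((a/2) * u' = r' * (1 - u') ^ (a / (2 * γ) - 1) - γ) →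
        (a/2 = r' * (1 - a / (2 * γ)) * (1 - u') ^ (a / (2 * γ) - 2)) →
        u' = u₀ ∧ r' = r := by
  have ha : 0 < a := hγ.trans h1
  have h4 : 0 < 4 * γ - a := by linarith
  have h2a : 0 < 2 * γ - a := by linarith
  have hdpos : 0 < a * (4 * γ - a) := mul_pos ha h4
  have hden : a * (4 * γ - a) ≠ 0 := ne_of_gt hdpos
  have h1u : 1 - u₀ = (4 * γ^2 - a^2) / (a * (4 * γ - a)) := by
    rw [hu₀]; field_simp; ring
  have h1u0 : 0 < 1 - u₀ := by
    rw [h1u]; apply div_pos; nlinarith; exact hdpos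
  have hu0pos : 0 < u₀ := by
    rw [hu₀]; apply div_pos; nlinarith; exact hdpos
  have hu0lt : u₀ < 1 := by linarith
  have hrpos : 0 < r := by
    rw [hr]
    exact mul_pos (div_pos (mul_pos ha hγ) h2a) (Real.rpow_pos_of_pos h1u0 _)
  have key1 : r * (1 - u₀) ^ (a / (2 * γ) - 1) = (a * γ / (2 * γ - a)) * (1 - u₀) := by
    rw [hr, mul_assoc, ← Real.rpow_add h1u0,
      show (2 - a / (2 * γ)) + (a / (2 * γ) - 1) = 1 by ring, Real.rpow_one]
  have e0 : (1 - u₀) ^ (2 - a / (2 * γ)) * (1 - u₀) ^ (a / (2 * γ) - 2) = 1 := by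
    rw [← Real.rpow_add h1u0,
      show (2 - a / (2 * γ)) + (a / (2 * γ) - 2) = 0 by ring, Real.rpow_zero]
  have hC : a * γ / (2 * γ - a) * (1 - a / (2 * γ)) = a / 2 := by
    field_simp [(ne_of_gt (by linarith) : γ * 2 - a ≠ 0)]
  have key2 : a / 2 = r * (1 - a / (2 * γ)) * (1 - u₀) ^ (a / (2 * γ) - 2) := by
    rw [hr]
    linear_combination (-(a * γ / (2 * γ - a)) * (1 - a / (2 * γ))) * e0 - hC
  refine ⟨?_, key2, hu0pos, hu0lt, hrpos, h1u, ?_⟩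
  · rw [key1, hu₀]
    field_simp
    ring
  · intro u' r' hu' hr' heq1 heq2
    have h1u' : 0 < 1 - u' := by have := hu'.2; linarith
    have hsplit : (1 - u') ^ (a / (2 * γ) - 1)
        = (1 - u') ^ (a / (2 * γ) - 2) * (1 - u') := by
      rw [show a / (2 * γ) - 1 = (a / (2 * γ) - 2) + 1 by ring,
        Real.rpow_add h1u', Real.rpow_one]
    have e2 : (a / 2) * (1 - u') = r' * (1 - a / (2 * γ)) * (1 - u') ^ (a / (2 * γ) - 1) := by
      linear_combination (1 - u') * heq2 - r' * (1 - a / (2 * γ)) * hsplit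
    have lin : (a / 2) * (1 - u') = ((a / 2) * u' + γ) * (1 - a / (2 * γ)) := by
      linear_combination e2 - (1 - a / (2 * γ)) * heq1
    have hu'eq : u' = u₀ := by
      rw [hu₀]
      field_simp [(ne_of_gt (by linarith) : γ * 4 - a ≠ 0)] at lin ⊢
      nlinarith [lin]
    refine ⟨hu'eq, ?_⟩
    subst hu'eq
    have hβ : 0 < 1 - a / (2 * γ) := by
      rw [sub_pos, div_lt_one (by linarith)]; linarith
    have hpos : 0 < (1 - a / (2 * γ)) * (1 - u') ^ (a / (2 * γ) - 2) :=
      mul_pos hβ (Real.rpow_pos_of_pos h1u' _)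
    have : r' * ((1 - a / (2 * γ)) * (1 - u') ^ (a / (2 * γ) - 2))
        = r * ((1 - a / (2 * γ)) * (1 - u') ^ (a / (2 * γ) - 2)) := by
      rw [← mul_assoc, ← mul_assoc, ← heq2]
      linear_combination key2
    exact mul_right_cancel₀ (ne_of_gt hpos) this
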